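/- Let N ≥ 1, let f : [0,1]^N → ℝ be a continuous, symmetric, affiliated probability density function, and let 0 = r_0 < r_1 < ⋯ < r_k = 1 be an arbitrary partition of [0,1]. Define the box-average T_B^k(f) : [0,1]^N → ℝ by T_B^k(f)(v) = (∫_{B(v)} f(u) du) / (∫_{B(v)} du), where B(v) = ∏_{n=1}^N (r_{I(v_n)−1}, r_{I(v_n)}] and I(v) = j if and only if v ∈ (r_{j−1}, r_j]. Then T_B^k(f) is affiliated. -/

import Mathlib

open MeasureTheory Set

/-- The index `I(v)` of the partition cell `(r_{j-1}, r_j]` containing `v`: the least `j`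
with `v ≤ r j` (for `v ∈ (r_{j-1}, r_j]` and `r` increasing this is exactly `j`). -/
noncomputable def boxIdx (r : ℕ → ℝ) (v : ℝ) : ℕ :=
  sInf {j : ℕ | v ≤ r j}

/-- The box `B(v) = ∏ₙ (r_{I(vₙ)−1}, r_{I(vₙ)}]` containing `v`. -/
noncomputable def box (N : ℕ) (r : ℕ → ℝ) (v : Fin N → ℝ) : Set (Fin N → ℝ) :=
  {u | ∀ n, r (boxIdx r (v n) - 1) < u n ∧ u n ≤ r (boxIdx r (v n))}

/-- The box average `T_B^k(f)(v) = (∫_{B(v)} f(u) du) / (∫_{B(v)} du)`. -/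
noncomputable def boxT (N : ℕ) (r : ℕ → ℝ) (f : (Fin N → ℝ) → ℝ) (v : Fin N → ℝ) : ℝ :=
  (∫ u in box N r v, f u) / (∫ u in box N r v, (1 : ℝ))

/-- `f` is affiliated (MTP₂) on the set `s`: `f(x ∨ y) f(x ∧ y) ≥ f(x) f(y)` for `x, y ∈ s`,
where `⊔`/`⊓` are the componentwise max/min. -/
def AffiliatedOn {N : ℕ} (f : (Fin N → ℝ) → ℝ) (s : Set (Fin N → ℝ)) : Prop :=
  ∀ x ∈ s, ∀ y ∈ s, f (x ⊔ y) * f (x ⊓ y) ≥ f x * f y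

noncomputable def Box (N : ℕ) (e : Fin N → ℝ × ℝ) : Set (Fin N → ℝ) :=
  Set.univ.pi fun n => Set.Ioc (e n).1 (e n).2

lemma Box_measurable (N : ℕ) (e : Fin N → ℝ × ℝ) : MeasurableSet (Box N e) :=
  MeasurableSet.univ_pi fun _ => measurableSet_Ioc

lemma Box_volume_lt_top (N : ℕ) (e : Fin N → ℝ × ℝ) : volume (Box N e) < ⊤ := by
  rw [Box, volume_pi_pi]
  exact ENNReal.prod_lt_top
    (fun i _ => (by simp [Real.volume_Ioc] : volume (Set.Ioc (e i).1 (e i).2) < ⊤))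

lemma mem_Box_cons {N : ℕ} (e : Fin (N+1) → ℝ × ℝ) (s : ℝ) (z : Fin N → ℝ) :
    Fin.cons s z ∈ Box (N+1) e ↔ s ∈ Set.Ioc (e 0).1 (e 0).2 ∧ z ∈ Box N (fun n => e n.succ) := by
  constructor
  · intro h
    refine ⟨h 0 (mem_univ _), fun n _ => ?_⟩
    simpa using h n.succ (mem_univ _)
  · rintro ⟨h0, h1⟩ n _
    refine Fin.cases ?_ (fun i => ?_) n
    · simpa using h0
    · simpa using h1 i (mem_univ _)

lemma cons_sup {N : ℕ} (s t : ℝ) (p q : Fin N → ℝ) :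
    (Fin.cons s p : Fin (N+1) → ℝ) ⊔ Fin.cons t q = Fin.cons (max s t) (p ⊔ q) := by
  funext n
  refine Fin.cases ?_ (fun i => ?_) n <;> simp [Pi.sup_apply]

lemma cons_inf {N : ℕ} (s t : ℝ) (p q : Fin N → ℝ) :
    (Fin.cons s p : Fin (N+1) → ℝ) ⊓ Fin.cons t q = Fin.cons (min s t) (p ⊓ q) := by
  funext n
  refine Fin.cases ?_ (fun i => ?_) n <;> simp [Pi.inf_apply]

lemma measurable_consR {N : ℕ} (s : ℝ) :
    Measurable (fun z : Fin N → ℝ => (Fin.cons s z : Fin (N+1) → ℝ)) := by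
  rw [measurable_pi_iff]
  intro n
  refine Fin.cases ?_ (fun i => ?_) n
  · simpa using measurable_const
  · simpa using measurable_pi_apply i

lemma two_point {α β a b : ℝ} (hα : 0 ≤ α) (hβ : 0 ≤ β) (ha : 0 ≤ a) (hb : 0 ≤ b)
    (h1 : a ≤ α) (h2 : b ≤ α) (h3 : a * b ≤ α * β) : a + b ≤ α + β := by
  rcases eq_or_lt_of_le hα with h0 | h0
  · have ha' : a = 0 := le_antisymm (h1.trans h0.symm.le) ha
    have hb' : b = 0 := le_antisymm (h2.trans h0.symm.le) hb
    simp [ha', hb']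
    nlinarith
  · nlinarith [mul_nonneg (sub_nonneg.2 h1) (sub_nonneg.2 h2)]

lemma integrableOn_Ioc_of_bound (g : ℝ → ℝ) (hg : Measurable g) (C : ℝ)
    (h : ∀ s, |g s| ≤ C) (a b : ℝ) : IntegrableOn g (Set.Ioc a b) := by
  haveI : IsFiniteMeasure ((volume : Measure ℝ).restrict (Set.Ioc a b)) := by
    constructor
    rw [Measure.restrict_apply_univ]
    simp [Real.volume_Ioc]
  refine Integrable.mono' (integrable_const C) hg.aestronglyMeasurable ?_
  filter_upwards with s using by simpa using h s

lemma sliceInt_meas {N : ℕ} (G : (Fin (N+1) → ℝ) → ℝ) (hG : Measurable G)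
    (e : Fin N → ℝ × ℝ) :
    Measurable (fun s : ℝ => ∫ z in Box N e, G (Fin.cons s z)) := by
  have hΦ : Measurable (fun p : ℝ × (Fin N → ℝ) =>
      ((Set.univ : Set ℝ) ×ˢ Box N e).indicator (fun p : ℝ × (Fin N → ℝ) => G (Fin.cons p.1 p.2)) p) := by
    refine Measurable.indicator ?_ (MeasurableSet.univ.prod (Box_measurable N e))
    apply hG.comp
    rw [measurable_pi_iff]
    intro n
    refine Fin.cases ?_ (fun i => ?_) n
    · simpa using measurable_fst
    · simpa [Function.comp_def] using (measurable_pi_apply i).comp measurable_snd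
  have := hΦ.stronglyMeasurable.integral_prod_right' (ν := (volume : Measure (Fin N → ℝ)))
  have heq : (fun s : ℝ => ∫ z in Box N e, G (Fin.cons s z))
      = fun s : ℝ => ∫ z, ((Set.univ : Set ℝ) ×ˢ Box N e).indicator
          (fun p : ℝ × (Fin N → ℝ) => G (Fin.cons p.1 p.2)) (s, z) := by
    funext s
    rw [← integral_indicator (Box_measurable N e)]
    congr 1
    funext z
    by_cases hz : z ∈ Box N e <;> simp [Set.indicator, hz]
  rw [heq]
  exact this.measurable

lemma sliceInt_nonneg {N : ℕ} (G : (Fin (N+1) → ℝ) → ℝ) (h : ∀ z, 0 ≤ G z)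
    (e : Fin N → ℝ × ℝ) (s : ℝ) : 0 ≤ ∫ z in Box N e, G (Fin.cons s z) :=
  setIntegral_nonneg (Box_measurable N e) fun z _ => h _

lemma sliceInt_bound {N : ℕ} (G : (Fin (N+1) → ℝ) → ℝ) (M : ℝ)
    (h : ∀ z, |G z| ≤ M) (e : Fin N → ℝ × ℝ) (s : ℝ) :
    |∫ z in Box N e, G (Fin.cons s z)| ≤ M * (volume (Box N e)).toReal := by
  have := norm_setIntegral_le_of_norm_le_const (μ := volume) (s := Box N e)
    (f := fun z => G (Fin.cons s z)) (C := M) (Box_volume_lt_top N e)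
    (fun z _ => by simpa using h _)
  simpa [measureReal_def] using this

lemma box_integral_succ {N : ℕ} (F : (Fin (N+1) → ℝ) → ℝ) (hF : Measurable F)
    (M : ℝ) (hb : ∀ u, |F u| ≤ M) (e : Fin (N+1) → ℝ × ℝ) :
    ∫ u in Box (N+1) e, F u
      = ∫ s in Set.Ioc (e 0).1 (e 0).2, ∫ z in Box N (fun n => e n.succ), F (Fin.cons s z) := by
  have hmp := (volume_preserving_piFinSuccAbove (fun _ : Fin (N+1) => ℝ) 0).symm
  have hemb := (MeasurableEquiv.piFinSuccAbove (fun _ : Fin (N+1) => ℝ) 0).symm.measurableEmbedding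
  have hpre : (MeasurableEquiv.piFinSuccAbove (fun _ : Fin (N+1) => ℝ) 0).symm ⁻¹' (Box (N+1) e)
      = (Set.Ioc (e 0).1 (e 0).2) ×ˢ (Box N (fun n => e n.succ)) := by
    ext p
    obtain ⟨s, z⟩ := p
    have : (MeasurableEquiv.piFinSuccAbove (fun _ : Fin (N+1) => ℝ) 0).symm (s, z)
        = Fin.cons s z := by
      simp [MeasurableEquiv.piFinSuccAbove_symm_apply, Fin.insertNthEquiv, Fin.insertNth_zero']
    simp only [Set.mem_preimage, this, mem_Box_cons, Set.mem_prod]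
  have key := hmp.setIntegral_preimage_emb hemb F (Box (N+1) e)
  rw [← key, hpre]
  have hint : IntegrableOn (fun p : ℝ × (Fin N → ℝ) => F (Fin.cons p.1 p.2))
      ((Set.Ioc (e 0).1 (e 0).2) ×ˢ (Box N (fun n => e n.succ))) (volume.prod volume) := by
    have hmeas : Measurable (fun p : ℝ × (Fin N → ℝ) => F (Fin.cons p.1 p.2)) := by
      apply hF.comp
      rw [measurable_pi_iff]
      intro n
      refine Fin.cases ?_ (fun i => ?_) n
      · simpa using measurable_fst
      · simpa [Function.comp_def] using (measurable_pi_apply i).comp measurable_snd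
    haveI : IsFiniteMeasure ((volume.prod volume).restrict
        ((Set.Ioc (e 0).1 (e 0).2) ×ˢ (Box N (fun n => e n.succ)))) := by
      constructor
      rw [Measure.restrict_apply_univ, Measure.prod_prod]
      exact ENNReal.mul_lt_top (by simp [Real.volume_Ioc]) (Box_volume_lt_top _ _)
    refine Integrable.mono' (integrable_const M) hmeas.aestronglyMeasurable ?_
    · filter_upwards with p using by simpa using hb _
  have hfin : ((volume : Measure ℝ).restrict (Set.Ioc (e 0).1 (e 0).2)).prod
      ((volume : Measure (Fin N → ℝ)).restrict (Box N (fun n => e n.succ)))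
      = (volume.prod volume).restrict
        ((Set.Ioc (e 0).1 (e 0).2) ×ˢ (Box N (fun n => e n.succ))) :=
    Measure.prod_restrict _ _
  have hcongr : ∀ x : ℝ × (Fin N → ℝ),
      F ((MeasurableEquiv.piFinSuccAbove (fun _ : Fin (N+1) => ℝ) 0).symm x)
        = F (Fin.cons x.1 x.2) := by
    rintro ⟨s, z⟩
    congr 1
    simp [MeasurableEquiv.piFinSuccAbove_symm_apply, Fin.insertNthEquiv, Fin.insertNth_zero']
  simp_rw [hcongr]
  rw [Measure.volume_eq_prod, ← Measure.prod_restrict]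
  have hint' : Integrable (fun p : ℝ × (Fin N → ℝ) => F (Fin.cons p.1 p.2))
      (((volume : Measure ℝ).restrict (Set.Ioc (e 0).1 (e 0).2)).prod
        ((volume : Measure (Fin N → ℝ)).restrict (Box N (fun n => e n.succ)))) := by
    rw [Measure.prod_restrict]; exact hint
  rw [integral_prod _ hint']

theorem L4 : ∀ (N : ℕ) (F1 F2 F3 F4 : (Fin N → ℝ) → ℝ) (M : ℝ),
    Measurable F1 → Measurable F2 → Measurable F3 → Measurable F4 →
    (∀ z, 0 ≤ F1 z ∧ F1 z ≤ M) → (∀ z, 0 ≤ F2 z ∧ F2 z ≤ M) →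
    (∀ z, 0 ≤ F3 z ∧ F3 z ≤ M) → (∀ z, 0 ≤ F4 z ∧ F4 z ≤ M) →
    ∀ (x y u l : Fin N → ℝ × ℝ),
    (∀ n, (x n = y n ∧ u n = x n ∧ l n = x n) ∨
      ((y n).2 ≤ (x n).1 ∧ u n = x n ∧ l n = y n) ∨
      ((x n).2 ≤ (y n).1 ∧ u n = y n ∧ l n = x n)) →
    (∀ p ∈ Box N x, ∀ q ∈ Box N y, F3 p * F4 q ≤ F1 (p ⊔ q) * F2 (p ⊓ q)) →
    (∫ p in Box N x, F3 p) * (∫ q in Box N y, F4 q) ≤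
      (∫ p in Box N u, F1 p) * (∫ q in Box N l, F2 q) := by
  intro N
  induction N with
  | zero =>
    intro F1 F2 F3 F4 M _ _ _ _ _ _ _ _ x y u l _ hpair
    have hbox : ∀ e : Fin 0 → ℝ × ℝ, Box 0 e = Set.univ := by
      intro e; ext w; simp [Box]
    have hvol : (volume : Measure (Fin 0 → ℝ)) Set.univ = 1 := by
      simp [volume_pi, Measure.pi_univ]
    have hint : ∀ G : (Fin 0 → ℝ) → ℝ, ∀ e : Fin 0 → ℝ × ℝ,
        (∫ p in Box 0 e, G p) = G default := by
      intro G e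
      rw [hbox, Measure.restrict_univ, integral_unique, measureReal_def, hvol]
      simp only [ENNReal.toReal_one, one_smul]
      congr 1
      exact Subsingleton.elim _ _
    rw [hint, hint, hint, hint]
    have h := hpair default (by rw [hbox]; trivial) default (by rw [hbox]; trivial)
    have e1 : (default ⊔ default : Fin 0 → ℝ) = default := Subsingleton.elim _ _
    have e2 : (default ⊓ default : Fin 0 → ℝ) = default := Subsingleton.elim _ _
    rwa [e1, e2] at h
  | succ N ih =>
    intro F1 F2 F3 F4 M hm1 hm2 hm3 hm4 h1 h2 h3 h4 x y u l hcell hpair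
    have hM : (0:ℝ) ≤ M := le_trans (h1 default).1 (h1 default).2
    have habs : ∀ (G : (Fin (N+1) → ℝ) → ℝ), (∀ z, 0 ≤ G z ∧ G z ≤ M) → ∀ z, |G z| ≤ M :=
      fun G hG z => by rw [abs_of_nonneg (hG z).1]; exact (hG z).2
    set x' : Fin N → ℝ × ℝ := fun n => x n.succ with hx'
    set y' : Fin N → ℝ × ℝ := fun n => y n.succ with hy'
    set u' : Fin N → ℝ × ℝ := fun n => u n.succ with hu'
    set l' : Fin N → ℝ × ℝ := fun n => l n.succ with hl'
    set A1 : ℝ → ℝ := fun s => ∫ z in Box N u', F1 (Fin.cons s z) with hA1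
    set A2 : ℝ → ℝ := fun s => ∫ z in Box N l', F2 (Fin.cons s z) with hA2
    set A3 : ℝ → ℝ := fun s => ∫ z in Box N x', F3 (Fin.cons s z) with hA3
    set A4 : ℝ → ℝ := fun s => ∫ z in Box N y', F4 (Fin.cons s z) with hA4
    have hA1m : Measurable A1 := sliceInt_meas F1 hm1 u'
    have hA2m : Measurable A2 := sliceInt_meas F2 hm2 l'
    have hA3m : Measurable A3 := sliceInt_meas F3 hm3 x'
    have hA4m : Measurable A4 := sliceInt_meas F4 hm4 y'
    have hA1n : ∀ s, 0 ≤ A1 s := fun s => sliceInt_nonneg F1 (fun z => (h1 z).1) u' s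
    have hA2n : ∀ s, 0 ≤ A2 s := fun s => sliceInt_nonneg F2 (fun z => (h2 z).1) l' s
    have hA3n : ∀ s, 0 ≤ A3 s := fun s => sliceInt_nonneg F3 (fun z => (h3 z).1) x' s
    have hA4n : ∀ s, 0 ≤ A4 s := fun s => sliceInt_nonneg F4 (fun z => (h4 z).1) y' s
    have hA1b : ∀ s, |A1 s| ≤ M * (volume (Box N u')).toReal :=
      fun s => sliceInt_bound F1 M (habs F1 h1) u' s
    have hA2b : ∀ s, |A2 s| ≤ M * (volume (Box N l')).toReal :=
      fun s => sliceInt_bound F2 M (habs F2 h2) l' s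
    have hA3b : ∀ s, |A3 s| ≤ M * (volume (Box N x')).toReal :=
      fun s => sliceInt_bound F3 M (habs F3 h3) x' s
    have hA4b : ∀ s, |A4 s| ≤ M * (volume (Box N y')).toReal :=
      fun s => sliceInt_bound F4 M (habs F4 h4) y' s
    have hbdd : ∀ (g : ℝ → ℝ) (K : ℝ), Measurable g → (∀ s, |g s| ≤ K) →
        ∀ (c : ℝ) (a b : ℝ), IntegrableOn (fun s => c * g s) (Set.Ioc a b) ∧
          IntegrableOn (fun s => g s * c) (Set.Ioc a b) := by
      intro g K hg hK c a b
      constructor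
      · exact integrableOn_Ioc_of_bound _ (measurable_const.mul hg) (|c| * K)
          (fun s => by rw [Pi.mul_apply, abs_mul]; exact mul_le_mul_of_nonneg_left (hK s) (abs_nonneg c)) a b
      · exact integrableOn_Ioc_of_bound _ (hg.mul measurable_const) (K * |c|)
          (fun s => by rw [Pi.mul_apply, abs_mul]; exact mul_le_mul_of_nonneg_right (hK s) (abs_nonneg c)) a b
    -- decompose the four box integrals
    have hX : ∫ p in Box (N+1) x, F3 p = ∫ s in Set.Ioc (x 0).1 (x 0).2, A3 s :=
      box_integral_succ F3 hm3 M (habs F3 h3) x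
    have hY : ∫ q in Box (N+1) y, F4 q = ∫ t in Set.Ioc (y 0).1 (y 0).2, A4 t :=
      box_integral_succ F4 hm4 M (habs F4 h4) y
    have hU : ∫ p in Box (N+1) u, F1 p = ∫ s in Set.Ioc (u 0).1 (u 0).2, A1 s :=
      box_integral_succ F1 hm1 M (habs F1 h1) u
    have hL : ∫ q in Box (N+1) l, F2 q = ∫ t in Set.Ioc (l 0).1 (l 0).2, A2 t :=
      box_integral_succ F2 hm2 M (habs F2 h2) l
    -- the master inequality from the induction hypothesis
    have master : ∀ c d : ℝ, c ∈ Set.Ioc (x 0).1 (x 0).2 → d ∈ Set.Ioc (y 0).1 (y 0).2 →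
        A3 c * A4 d ≤ A1 (max c d) * A2 (min c d) := by
      intro c d hc hd
      refine ih (fun z => F1 (Fin.cons (max c d) z)) (fun z => F2 (Fin.cons (min c d) z))
        (fun z => F3 (Fin.cons c z)) (fun z => F4 (Fin.cons d z)) M
        (hm1.comp (measurable_consR _)) (hm2.comp (measurable_consR _))
        (hm3.comp (measurable_consR _)) (hm4.comp (measurable_consR _))
        (fun z => h1 _) (fun z => h2 _) (fun z => h3 _) (fun z => h4 _)
        x' y' u' l' (fun n => hcell n.succ) ?_
      intro p' hp' q' hq'
      have := hpair (Fin.cons c p') ((mem_Box_cons x c p').2 ⟨hc, hp'⟩)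
        (Fin.cons d q') ((mem_Box_cons y d q').2 ⟨hd, hq'⟩)
      rwa [cons_sup, cons_inf] at this
    rw [hX, hY, hU, hL]
    rcases hcell 0 with ⟨hxy, hux, hlx⟩ | ⟨hyx, hux, hly⟩ | ⟨hxyo, huy, hlx⟩
    · -- equal intervals at coordinate 0
      rw [hux, hlx, ← hxy]
      set C := Set.Ioc (x 0).1 (x 0).2 with hC
      set P1 := ∫ s in C, A1 s with hP1
      set P2 := ∫ s in C, A2 s with hP2
      set P3 := ∫ s in C, A3 s with hP3
      set P4 := ∫ s in C, A4 s with hP4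
      have master' : ∀ c ∈ C, ∀ d ∈ C, A3 c * A4 d ≤ A1 (max c d) * A2 (min c d) :=
        fun c hc d hd => master c d hc (hxy ▸ hd)
      have key : ∀ s ∈ C, ∀ t ∈ C, t ≤ s →
          A3 s * A4 t + A3 t * A4 s ≤ A1 s * A2 t + A1 t * A2 s := by
        intro s hs t ht hts
        have m1 : A3 s * A4 t ≤ A1 s * A2 t := by
          have := master' s hs t ht
          rwa [max_eq_left hts, min_eq_right hts] at this
        have m2 : A3 t * A4 s ≤ A1 s * A2 t := by
          have := master' t ht s hs
          rwa [max_eq_right hts, min_eq_left hts] at this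
        have ms : A3 s * A4 s ≤ A1 s * A2 s := by
          have := master' s hs s hs
          rwa [max_self, min_self] at this
        have mt : A3 t * A4 t ≤ A1 t * A2 t := by
          have := master' t ht t ht
          rwa [max_self, min_self] at this
        have hprod : (A3 s * A4 t) * (A3 t * A4 s) ≤ (A1 s * A2 t) * (A1 t * A2 s) := by
          have e1 : (A3 s * A4 t) * (A3 t * A4 s) = (A3 s * A4 s) * (A3 t * A4 t) := by ring
          have e2 : (A1 s * A2 t) * (A1 t * A2 s) = (A1 s * A2 s) * (A1 t * A2 t) := by ring
          rw [e1, e2]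
          exact mul_le_mul ms mt (mul_nonneg (hA3n t) (hA4n t))
            (mul_nonneg (hA1n s) (hA2n s))
        exact two_point (mul_nonneg (hA1n s) (hA2n t)) (mul_nonneg (hA1n t) (hA2n s))
          (mul_nonneg (hA3n s) (hA4n t)) (mul_nonneg (hA3n t) (hA4n s)) m1 m2 hprod
      have sym : ∀ s ∈ C, ∀ t ∈ C,
          A3 s * A4 t + A3 t * A4 s ≤ A1 s * A2 t + A1 t * A2 s := by
        intro s hs t ht
        rcases le_total t s with hts | hst
        · exact key s hs t ht hts
        · have := key t ht s hs hst
          linarith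
      have inner : ∀ s, s ∈ C → A3 s * P4 + P3 * A4 s ≤ A1 s * P2 + P1 * A2 s := by
        intro s hs
        have hi3 : IntegrableOn (fun t => A3 s * A4 t) C :=
          (hbdd A4 _ hA4m hA4b (A3 s) _ _).1
        have hi3' : IntegrableOn (fun t => A3 t * A4 s) C :=
          (hbdd A3 _ hA3m hA3b (A4 s) _ _).2
        have hi1 : IntegrableOn (fun t => A1 s * A2 t) C :=
          (hbdd A2 _ hA2m hA2b (A1 s) _ _).1
        have hi1' : IntegrableOn (fun t => A1 t * A2 s) C :=
          (hbdd A1 _ hA1m hA1b (A2 s) _ _).2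
        have hmono : ∫ t in C, (A3 s * A4 t + A3 t * A4 s)
            ≤ ∫ t in C, (A1 s * A2 t + A1 t * A2 s) :=
          setIntegral_mono_on (hi3.add hi3') (hi1.add hi1') measurableSet_Ioc
            (fun t ht => sym s hs t ht)
        rw [integral_add hi3 hi3', integral_add hi1 hi1',
          integral_const_mul, integral_const_mul, integral_mul_const, integral_mul_const]
          at hmono
        exact hmono
      have hiL : IntegrableOn (fun s => A3 s * P4 + P3 * A4 s) C :=
        ((hbdd A3 _ hA3m hA3b P4 _ _).2.add (hbdd A4 _ hA4m hA4b P3 _ _).1)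
      have hiR : IntegrableOn (fun s => A1 s * P2 + P1 * A2 s) C :=
        ((hbdd A1 _ hA1m hA1b P2 _ _).2.add (hbdd A2 _ hA2m hA2b P1 _ _).1)
      have fin : ∫ s in C, (A3 s * P4 + P3 * A4 s) ≤ ∫ s in C, (A1 s * P2 + P1 * A2 s) :=
        setIntegral_mono_on hiL hiR measurableSet_Ioc inner
      rw [integral_add ((hbdd A3 _ hA3m hA3b P4 _ _).2) ((hbdd A4 _ hA4m hA4b P3 _ _).1),
        integral_add ((hbdd A1 _ hA1m hA1b P2 _ _).2) ((hbdd A2 _ hA2m hA2b P1 _ _).1),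
        integral_mul_const, integral_const_mul, integral_mul_const, integral_const_mul]
        at fin
      -- fin : P3 * P4 + P3 * P4 ≤ P1 * P2 + P1 * P2
      linarith
    · -- y-interval below x-interval
      rw [hux, hly]
      have step1 : ∀ s ∈ Set.Ioc (x 0).1 (x 0).2,
          A3 s * (∫ t in Set.Ioc (y 0).1 (y 0).2, A4 t)
            ≤ A1 s * (∫ t in Set.Ioc (y 0).1 (y 0).2, A2 t) := by
        intro s hs
        have hmono : ∫ t in Set.Ioc (y 0).1 (y 0).2, A3 s * A4 t
            ≤ ∫ t in Set.Ioc (y 0).1 (y 0).2, A1 s * A2 t := by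
          refine setIntegral_mono_on ((hbdd A4 _ hA4m hA4b (A3 s) _ _).1)
            ((hbdd A2 _ hA2m hA2b (A1 s) _ _).1) measurableSet_Ioc (fun t ht => ?_)
          have hts : t ≤ s := le_trans ht.2 (le_trans hyx (le_of_lt hs.1))
          have := master s t hs ht
          rwa [max_eq_left hts, min_eq_right hts] at this
        rwa [integral_const_mul, integral_const_mul] at hmono
      have hmono2 : ∫ s in Set.Ioc (x 0).1 (x 0).2,
            A3 s * (∫ t in Set.Ioc (y 0).1 (y 0).2, A4 t)
          ≤ ∫ s in Set.Ioc (x 0).1 (x 0).2,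
            A1 s * (∫ t in Set.Ioc (y 0).1 (y 0).2, A2 t) :=
        setIntegral_mono_on ((hbdd A3 _ hA3m hA3b _ _ _).2)
          ((hbdd A1 _ hA1m hA1b _ _ _).2) measurableSet_Ioc step1
      rwa [integral_mul_const, integral_mul_const] at hmono2
    · -- x-interval below y-interval
      rw [huy, hlx]
      have step1 : ∀ t ∈ Set.Ioc (y 0).1 (y 0).2,
          (∫ s in Set.Ioc (x 0).1 (x 0).2, A3 s) * A4 t
            ≤ A1 t * (∫ s in Set.Ioc (x 0).1 (x 0).2, A2 s) := by
        intro t ht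
        have hmono : ∫ s in Set.Ioc (x 0).1 (x 0).2, A3 s * A4 t
            ≤ ∫ s in Set.Ioc (x 0).1 (x 0).2, A1 t * A2 s := by
          refine setIntegral_mono_on ((hbdd A3 _ hA3m hA3b (A4 t) _ _).2)
            ((hbdd A2 _ hA2m hA2b (A1 t) _ _).1) measurableSet_Ioc (fun s hs => ?_)
          have hst : s ≤ t := le_trans hs.2 (le_trans hxyo (le_of_lt ht.1))
          have := master s t hs ht
          rwa [max_eq_right hst, min_eq_left hst] at this
        rwa [integral_mul_const, integral_const_mul] at hmono
      have hmono2 : ∫ t in Set.Ioc (y 0).1 (y 0).2,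
            (∫ s in Set.Ioc (x 0).1 (x 0).2, A3 s) * A4 t
          ≤ ∫ t in Set.Ioc (y 0).1 (y 0).2,
            A1 t * (∫ s in Set.Ioc (x 0).1 (x 0).2, A2 s) :=
        setIntegral_mono_on ((hbdd A4 _ hA4m hA4b _ _ _).1)
          ((hbdd A1 _ hA1m hA1b _ _ _).2) measurableSet_Ioc step1
      rwa [integral_const_mul, integral_mul_const] at hmono2


lemma rmono {k : ℕ} {r : ℕ → ℝ} (hmono : ∀ j < k, r j < r (j + 1)) :
    ∀ d a, a + d ≤ k → r a ≤ r (a + d) := by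
  intro d
  induction d with
  | zero => intro a _; simp
  | succ d ihd =>
    intro a h
    have h1 : a + d ≤ k := by omega
    have h2 : a + d < k := by omega
    calc r a ≤ r (a + d) := ihd a h1
      _ ≤ r (a + d + 1) := le_of_lt (hmono _ h2)
      _ = r (a + (d+1)) := by ring_nf

lemma rmono' {k : ℕ} {r : ℕ → ℝ} (hmono : ∀ j < k, r j < r (j + 1))
    {a b : ℕ} (hab : a ≤ b) (hbk : b ≤ k) : r a ≤ r b := by
  have := rmono hmono (b - a) a (by omega)
  rwa [show a + (b - a) = b by omega] at this

lemma boxIdx_le {k : ℕ} {r : ℕ → ℝ} (hrk : r k = 1) {v : ℝ} (hv : v ≤ 1) :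
    boxIdx r v ≤ k :=
  Nat.sInf_le (by simp only [Set.mem_setOf_eq, hrk]; exact hv)

lemma boxIdx_mem {k : ℕ} {r : ℕ → ℝ} (hrk : r k = 1) {v : ℝ} (hv : v ≤ 1) :
    v ≤ r (boxIdx r v) :=
  Nat.sInf_mem (⟨k, by simp only [Set.mem_setOf_eq, hrk]; exact hv⟩ :
    {j : ℕ | v ≤ r j}.Nonempty)

lemma boxIdx_pos {k : ℕ} {r : ℕ → ℝ} (hr0 : r 0 = 0) (hrk : r k = 1)
    {v : ℝ} (hv : 0 < v) (hv1 : v ≤ 1) : 1 ≤ boxIdx r v := by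
  by_contra h
  push_neg at h
  have h0 : boxIdx r v = 0 := by omega
  have := boxIdx_mem hrk hv1
  rw [h0, hr0] at this
  linarith

lemma boxIdx_zero {r : ℕ → ℝ} (hr0 : r 0 = 0) {v : ℝ} (hv : v ≤ 0) :
    boxIdx r v = 0 :=
  Nat.sInf_eq_zero.mpr (Or.inl (by simp only [Set.mem_setOf_eq, hr0]; exact hv))

lemma boxIdx_mono {k : ℕ} {r : ℕ → ℝ} (hrk : r k = 1) {a b : ℝ} (hab : a ≤ b) (hb : b ≤ 1) :
    boxIdx r a ≤ boxIdx r b := by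
  have hmem : boxIdx r b ∈ {j : ℕ | b ≤ r j} :=
    Nat.sInf_mem (⟨k, by simp only [Set.mem_setOf_eq, hrk]; exact hb⟩ :
      {j : ℕ | b ≤ r j}.Nonempty)
  exact Nat.sInf_le (by simp only [Set.mem_setOf_eq]; exact le_trans hab hmem)

lemma boxIdx_max {k : ℕ} {r : ℕ → ℝ} (hrk : r k = 1) {a b : ℝ} (ha : a ≤ 1) (hb : b ≤ 1) :
    boxIdx r (max a b) = max (boxIdx r a) (boxIdx r b) := by
  rcases le_total a b with h | h
  · rw [max_eq_right h, max_eq_right (boxIdx_mono hrk h hb)]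
  · rw [max_eq_left h, max_eq_left (boxIdx_mono hrk h ha)]

lemma boxIdx_min {k : ℕ} {r : ℕ → ℝ} (hrk : r k = 1) {a b : ℝ} (ha : a ≤ 1) (hb : b ≤ 1) :
    boxIdx r (min a b) = min (boxIdx r a) (boxIdx r b) := by
  rcases le_total a b with h | h
  · rw [min_eq_left h, min_eq_left (boxIdx_mono hrk h hb)]
  · rw [min_eq_right h, min_eq_right (boxIdx_mono hrk h ha)]

/-- If `f` is a continuous, symmetric, affiliated probability density on
`[0,1]^N` and `0 = r₀ < r₁ < ⋯ < r_k = 1` is an arbitrary partition of `[0,1]`, then the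
box-average grid distribution `T_B^k(f)` is affiliated. -/
theorem box_average_of_affiliated_is_affiliated (N : ℕ) (hN : 1 ≤ N)
    (f : (Fin N → ℝ) → ℝ)
    (hcont : ContinuousOn f (Set.Icc 0 1))
    (hnonneg : ∀ v ∈ Set.Icc (0 : Fin N → ℝ) 1, 0 ≤ f v)
    (hprob : ∫ v in Set.Icc (0 : Fin N → ℝ) 1, f v = 1)
    (hsymm : ∀ (φ : Equiv.Perm (Fin N)) (v : Fin N → ℝ), f (v ∘ φ) = f v)
    (haff : AffiliatedOn f (Set.Icc 0 1))
    (k : ℕ) (hk : 0 < k) (r : ℕ → ℝ)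
    (hr0 : r 0 = 0) (hrk : r k = 1)
    (hmono : ∀ j < k, r j < r (j + 1)) :
    AffiliatedOn (boxT N r f) (Set.Icc 0 1) := by
  classical
  -- a globally measurable, nonnegative, bounded modification of `f`
  obtain ⟨Fc, hFc⟩ := ContinuousMap.exists_restrict_eq
    (isClosed_Icc (a := (0 : Fin N → ℝ)) (b := 1)) ⟨_, hcont.restrict⟩
  have hFc' : ∀ v ∈ Set.Icc (0 : Fin N → ℝ) 1, Fc v = f v := by
    intro v hv
    have := congrFun (congrArg DFunLike.coe hFc) ⟨v, hv⟩
    simpa using this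
  obtain ⟨M0, hM0⟩ := (isCompact_Icc (a := (0 : Fin N → ℝ)) (b := 1)).exists_bound_of_continuousOn hcont
  set M : ℝ := max M0 0 with hM
  set g : (Fin N → ℝ) → ℝ := (Set.Icc (0 : Fin N → ℝ) 1).indicator (fun v => max (Fc v) 0) with hg
  have hgm : Measurable g :=
    ((Fc.continuous.max continuous_const).measurable).indicator measurableSet_Icc
  have hg0 : ∀ z, 0 ≤ g z ∧ g z ≤ M := by
    intro z
    by_cases hz : z ∈ Set.Icc (0 : Fin N → ℝ) 1
    · refine ⟨by rw [hg, Set.indicator_of_mem hz]; exact le_max_right _ _, ?_⟩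
      rw [hg, Set.indicator_of_mem hz, hFc' z hz]
      have h1 : f z ≤ M0 := le_trans (le_abs_self _) (by simpa using hM0 z hz)
      exact max_le (le_trans h1 (le_max_left _ _)) (le_max_right _ _)
    · rw [hg, Set.indicator_of_notMem hz]
      exact ⟨le_rfl, le_max_right _ _⟩
  have hgf : ∀ v ∈ Set.Icc (0 : Fin N → ℝ) 1, g v = f v := by
    intro v hv
    rw [hg, Set.indicator_of_mem hv, hFc' v hv, max_eq_left (hnonneg v hv)]
  -- boxes as `Box` sets
  have box_eq : ∀ v : Fin N → ℝ,
      box N r v = Box N (fun n => (r (boxIdx r (v n) - 1), r (boxIdx r (v n)))) := by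
    intro v
    ext w
    simp [box, Box, Set.mem_pi]
  have box_subset : ∀ v ∈ Set.Icc (0 : Fin N → ℝ) 1,
      box N r v ⊆ Set.Icc (0 : Fin N → ℝ) 1 := by
    intro v hv w hw
    obtain ⟨hv0, hv1⟩ := Set.mem_Icc.mp hv
    rw [Set.mem_Icc]
    constructor <;> intro n
    · have h1 : r 0 ≤ r (boxIdx r (v n) - 1) :=
        rmono' hmono (Nat.zero_le _) (by
          have := boxIdx_le hrk (by simpa using hv1 n)
          omega)
      have := (hw n).1
      simp only [Pi.zero_apply]
      linarith [hr0 ▸ h1]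
    · have h1 : r (boxIdx r (v n)) ≤ r k :=
        rmono' hmono (boxIdx_le hrk (by simpa using hv1 n)) le_rfl
      have := (hw n).2
      simp only [Pi.one_apply]
      linarith [hrk ▸ h1]
  have hboxT_nonneg : ∀ v ∈ Set.Icc (0 : Fin N → ℝ) 1, 0 ≤ boxT N r f v := by
    intro v hv
    have hms : MeasurableSet (box N r v) := by
      rw [box_eq]; exact Box_measurable N _
    apply div_nonneg
    · exact setIntegral_nonneg hms fun w hw => hnonneg w (box_subset v hv hw)
    · exact setIntegral_nonneg hms fun w _ => zero_le_one
  intro xx hxx yy hyy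
  rw [ge_iff_le]
  have hxI : xx ⊔ yy ∈ Set.Icc (0 : Fin N → ℝ) 1 := by
    rw [Set.mem_Icc] at hxx hyy ⊢
    exact ⟨le_sup_of_le_left hxx.1, sup_le hxx.2 hyy.2⟩
  have hnI : xx ⊓ yy ∈ Set.Icc (0 : Fin N → ℝ) 1 := by
    rw [Set.mem_Icc] at hxx hyy ⊢
    exact ⟨le_inf hxx.1 hyy.1, inf_le_of_left_le hxx.2⟩
  by_cases hpos : (∀ n, 0 < xx n) ∧ (∀ n, 0 < yy n)
  swap
  · -- degenerate case : one of the boxes is empty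
    have hzero : boxT N r f xx * boxT N r f yy = 0 := by
      have hempty : ∀ v : Fin N → ℝ, (∃ n, v n ≤ 0) → boxT N r f v = 0 := by
        rintro v ⟨n, hn⟩
        have hidx : boxIdx r (v n) = 0 := boxIdx_zero hr0 hn
        have : box N r v = ∅ := by
          ext w
          simp only [box, Set.mem_setOf_eq, Set.mem_empty_iff_false, iff_false]
          intro hw
          have := hw n
          rw [hidx] at this
          simp at this
          linarith [this.1, this.2]
        simp only [boxT, this]
        simp
      rcases not_and_or.mp hpos with h | h
      · push_neg at h
        obtain ⟨n, hn⟩ := h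
        rw [hempty xx ⟨n, hn⟩, zero_mul]
      · push_neg at h
        obtain ⟨n, hn⟩ := h
        rw [hempty yy ⟨n, hn⟩, mul_zero]
    rw [hzero]
    exact mul_nonneg (hboxT_nonneg _ hxI) (hboxT_nonneg _ hnI)
  -- nondegenerate case
  obtain ⟨hxpos, hypos⟩ := hpos
  have hx1 : ∀ n, xx n ≤ 1 := fun n => by
    simpa using ((Set.mem_Icc.mp hxx).2) n
  have hy1 : ∀ n, yy n ≤ 1 := fun n => by
    simpa using ((Set.mem_Icc.mp hyy).2) n
  have hi1 : ∀ n, 1 ≤ boxIdx r (xx n) := fun n => boxIdx_pos hr0 hrk (hxpos n) (hx1 n)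
  have hj1 : ∀ n, 1 ≤ boxIdx r (yy n) := fun n => boxIdx_pos hr0 hrk (hypos n) (hy1 n)
  have hik : ∀ n, boxIdx r (xx n) ≤ k := fun n => boxIdx_le hrk (hx1 n)
  have hjk : ∀ n, boxIdx r (yy n) ≤ k := fun n => boxIdx_le hrk (hy1 n)
  set ex : Fin N → ℝ × ℝ := fun n => (r (boxIdx r (xx n) - 1), r (boxIdx r (xx n))) with hex
  set ey : Fin N → ℝ × ℝ := fun n => (r (boxIdx r (yy n) - 1), r (boxIdx r (yy n))) with hey
  set eu : Fin N → ℝ × ℝ := fun n => (r (max (boxIdx r (xx n)) (boxIdx r (yy n)) - 1),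
    r (max (boxIdx r (xx n)) (boxIdx r (yy n)))) with heu
  set el : Fin N → ℝ × ℝ := fun n => (r (min (boxIdx r (xx n)) (boxIdx r (yy n)) - 1),
    r (min (boxIdx r (xx n)) (boxIdx r (yy n)))) with hel
  have hbx : box N r xx = Box N ex := by rw [hex]; exact box_eq xx
  have hby : box N r yy = Box N ey := by rw [hey]; exact box_eq yy
  have hbu : box N r (xx ⊔ yy) = Box N eu := by
    rw [heu, box_eq]
    exact congrArg (Box N) (funext fun n => by
      have h' : boxIdx r ((xx ⊔ yy) n) = max (boxIdx r (xx n)) (boxIdx r (yy n)) := by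
        rw [Pi.sup_apply]
        exact boxIdx_max hrk (hx1 n) (hy1 n)
      rw [h'])
  have hbl : box N r (xx ⊓ yy) = Box N el := by
    rw [hel, box_eq]
    exact congrArg (Box N) (funext fun n => by
      have h' : boxIdx r ((xx ⊓ yy) n) = min (boxIdx r (xx n)) (boxIdx r (yy n)) := by
        rw [Pi.inf_apply]
        exact boxIdx_min hrk (hx1 n) (hy1 n)
      rw [h'])
  -- interval structure hypothesis
  have hcell : ∀ n, (ex n = ey n ∧ eu n = ex n ∧ el n = ex n) ∨
      ((ey n).2 ≤ (ex n).1 ∧ eu n = ex n ∧ el n = ey n) ∨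
      ((ex n).2 ≤ (ey n).1 ∧ eu n = ey n ∧ el n = ex n) := by
    intro n
    simp only [hex, hey, heu, hel]
    rcases lt_trichotomy (boxIdx r (xx n)) (boxIdx r (yy n)) with h | h | h
    · right; right
      refine ⟨rmono' hmono (by omega) (by have := hjk n; omega), ?_, ?_⟩
      · simp [max_eq_right h.le]
      · simp [min_eq_left h.le]
    · left
      refine ⟨by simp [h], by simp [h, max_self], by simp [h, min_self]⟩
    · right; left
      refine ⟨rmono' hmono (by omega) (by have := hik n; omega), ?_, ?_⟩
      · simp [max_eq_left h.le]
      · simp [min_eq_right h.le]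
  -- pair hypothesis for L4
  have hpair : ∀ p ∈ Box N ex, ∀ q ∈ Box N ey, g p * g q ≤ g (p ⊔ q) * g (p ⊓ q) := by
    intro p hp q hq
    rw [← hbx] at hp
    rw [← hby] at hq
    have hpI := box_subset xx hxx hp
    have hqI := box_subset yy hyy hq
    have hsI : p ⊔ q ∈ Set.Icc (0 : Fin N → ℝ) 1 := by
      rw [Set.mem_Icc] at hpI hqI ⊢
      exact ⟨le_sup_of_le_left hpI.1, sup_le hpI.2 hqI.2⟩
    have hiI : p ⊓ q ∈ Set.Icc (0 : Fin N → ℝ) 1 := by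
      rw [Set.mem_Icc] at hpI hqI ⊢
      exact ⟨le_inf hpI.1 hqI.1, inf_le_of_left_le hpI.2⟩
    rw [hgf p hpI, hgf q hqI, hgf _ hsI, hgf _ hiI]
    exact haff p hpI q hqI
  have main := L4 N g g g g M hgm hgm hgm hgm hg0 hg0 hg0 hg0 ex ey eu el hcell hpair
  -- numerators
  have hnum : ∀ (v : Fin N → ℝ) (e : Fin N → ℝ × ℝ), v ∈ Set.Icc (0 : Fin N → ℝ) 1 →
      box N r v = Box N e → (∫ u in box N r v, f u) = ∫ u in Box N e, g u := by
    intro v e hv hbe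
    rw [hbe]
    refine setIntegral_congr_fun (Box_measurable N e) (fun w hw => ?_)
    rw [← hbe] at hw
    exact (hgf w (box_subset v hv hw)).symm
  -- denominators
  have hlen : ∀ m, 1 ≤ m → m ≤ k → 0 < r m - r (m - 1) := by
    intro m h1 h2
    have := hmono (m - 1) (by omega)
    rw [show m - 1 + 1 = m by omega] at this
    linarith
  have hVol : ∀ (e : Fin N → ℝ × ℝ), (∀ n, (e n).1 ≤ (e n).2) →
      (∫ _u in Box N e, (1 : ℝ)) = ∏ n, ((e n).2 - (e n).1) := by
    intro e he
    rw [setIntegral_const, smul_eq_mul, mul_one, measureReal_def, Box, volume_pi_pi, ENNReal.toReal_prod]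
    refine Finset.prod_congr rfl (fun n _ => ?_)
    rw [Real.volume_Ioc, ENNReal.toReal_ofReal (by linarith [he n])]
  have hexle : ∀ n, (ex n).1 ≤ (ex n).2 := by
    intro n
    simp only [hex]
    linarith [hlen _ (hi1 n) (hik n)]
  have heyle : ∀ n, (ey n).1 ≤ (ey n).2 := by
    intro n
    simp only [hey]
    linarith [hlen _ (hj1 n) (hjk n)]
  have heule : ∀ n, (eu n).1 ≤ (eu n).2 := by
    intro n
    simp only [heu]
    linarith [hlen _ (le_trans (hi1 n) (le_max_left _ _)) (max_le (hik n) (hjk n))]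
  have helle : ∀ n, (el n).1 ≤ (el n).2 := by
    intro n
    simp only [hel]
    linarith [hlen _ (le_min (hi1 n) (hj1 n)) (le_trans (min_le_left _ _) (hik n))]
  have hVxpos : 0 < ∏ n, ((ex n).2 - (ex n).1) :=
    Finset.prod_pos fun n _ => by
      simp only [hex]; exact hlen _ (hi1 n) (hik n)
  have hVypos : 0 < ∏ n, ((ey n).2 - (ey n).1) :=
    Finset.prod_pos fun n _ => by
      simp only [hey]; exact hlen _ (hj1 n) (hjk n)
  have hVid : (∏ n, ((eu n).2 - (eu n).1)) * (∏ n, ((el n).2 - (el n).1))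
      = (∏ n, ((ex n).2 - (ex n).1)) * (∏ n, ((ey n).2 - (ey n).1)) := by
    rw [← Finset.prod_mul_distrib, ← Finset.prod_mul_distrib]
    refine Finset.prod_congr rfl fun n _ => ?_
    rcases le_total (boxIdx r (xx n)) (boxIdx r (yy n)) with h | h
    · simp only [heu, hel, hex, hey, max_eq_right h, min_eq_left h]
      try ring
    · simp only [heu, hel, hex, hey, max_eq_left h, min_eq_right h]
      try ring
  -- put everything together
  simp only [boxT]
  rw [hnum xx ex hxx hbx, hnum yy ey hyy hby, hnum _ eu hxI hbu, hnum _ el hnI hbl,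
    hbx, hby, hbu, hbl, hVol ex hexle, hVol ey heyle, hVol eu heule, hVol el helle,
    div_mul_div_comm, div_mul_div_comm, hVid]
  have hD : 0 < (∏ n, ((ex n).2 - (ex n).1)) * ∏ n, ((ey n).2 - (ey n).1) :=
    mul_pos hVxpos hVypos
  exact div_le_div_of_nonneg_right main hD.le
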